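/- Let K, M be fields and Ψ : H(K) → H(M) a group monomorphism mapping the center into the center, with component functions f₁,g₁,f₂,g₂,i as above. Set d := i(1) = f₁(1)g₂(1) − f₂(1)g₁(1). Then d ≠ 0 and the map θ := d⁻¹·i : K → M is a field homomorphism (it satisfies θ(1) = 1, θ(x+y) = θ(x)+θ(y), and θ(xy) = θ(x)θ(y)). -/

import Mathlib

/-- The Heisenberg group over a field `K`: upper unitriangular 3×3 matrices,
encoded by their entries `a` in position (1,2), `b` in position (2,3), `c` in position (1,3). -/
@[ext]
structure Heisenberg (K : Type*) [Field K] where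
  a : K
  b : K
  c : K

namespace Heisenberg

variable {K : Type*} [Field K]

/-- The corresponding upper unitriangular matrix. -/
def toMatrix (x : Heisenberg K) : Matrix (Fin 3) (Fin 3) K :=
  !![1, x.a, x.c; 0, 1, x.b; 0, 0, 1]

instance : Mul (Heisenberg K) :=
  ⟨fun x y => ⟨x.a + y.a, x.b + y.b, x.c + y.c + x.a * y.b⟩⟩
instance : One (Heisenberg K) := ⟨⟨0, 0, 0⟩⟩
instance : Inv (Heisenberg K) :=
  ⟨fun x => ⟨-x.a, -x.b, -x.c + x.a * x.b⟩⟩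

@[simp] lemma mul_a (x y : Heisenberg K) : (x * y).a = x.a + y.a := rfl
@[simp] lemma mul_b (x y : Heisenberg K) : (x * y).b = x.b + y.b := rfl
@[simp] lemma mul_c (x y : Heisenberg K) : (x * y).c = x.c + y.c + x.a * y.b := rfl
@[simp] lemma one_a : (1 : Heisenberg K).a = 0 := rfl
@[simp] lemma one_b : (1 : Heisenberg K).b = 0 := rfl
@[simp] lemma one_c : (1 : Heisenberg K).c = 0 := rfl
@[simp] lemma inv_a (x : Heisenberg K) : (x⁻¹).a = -x.a := rfl
@[simp] lemma inv_b (x : Heisenberg K) : (x⁻¹).b = -x.b := rfl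
@[simp] lemma inv_c (x : Heisenberg K) : (x⁻¹).c = -x.c + x.a * x.b := rfl

instance : Group (Heisenberg K) where
  mul_assoc x y z := by ext <;> simp <;> ring
  one_mul x := by ext <;> simp
  mul_one x := by ext <;> simp
  inv_mul_cancel x := by ext <;> simp

lemma toMatrix_mul (x y : Heisenberg K) :
    (x * y).toMatrix = x.toMatrix * y.toMatrix := by
  simp only [toMatrix, Matrix.mul_fin_three]
  norm_num
  refine ⟨⟨?_, ?_⟩, ?_⟩ <;> ring

end Heisenberg

/-- Let `Ψ : H(K) → H(M)` be a group monomorphism mapping the center into the center,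
with component functions as in the paper, and set `d := i 1`.  Then
`d = f₁ 1 * g₂ 1 - f₂ 1 * g₁ 1 ≠ 0` and `θ := d⁻¹ • i` is a field homomorphism. -/
theorem heisenberg_mono_field_hom {K M : Type*} [Field K] [Field M]
    (Ψ : Heisenberg K → Heisenberg M)
    (hmul : ∀ g h : Heisenberg K, Ψ (g * h) = Ψ g * Ψ h)
    (hinj : Function.Injective Ψ)
    (f₁ g₁ i₁ f₂ g₂ i₂ i : K → M)
    (h1 : ∀ x : K, Ψ ⟨x, 0, 0⟩ = (⟨f₁ x, g₁ x, i₁ x⟩ : Heisenberg M))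
    (h2 : ∀ y : K, Ψ ⟨0, y, 0⟩ = (⟨f₂ y, g₂ y, i₂ y⟩ : Heisenberg M))
    (hz : ∀ z : K, Ψ ⟨0, 0, z⟩ = (⟨0, 0, i z⟩ : Heisenberg M)) :
    i 1 ≠ 0 ∧
    i 1 = f₁ 1 * g₂ 1 - f₂ 1 * g₁ 1 ∧
    (fun x : K => (i 1)⁻¹ * i x) 1 = 1 ∧
    (∀ x y : K, (fun x : K => (i 1)⁻¹ * i x) (x + y) =
        (fun x : K => (i 1)⁻¹ * i x) x + (fun x : K => (i 1)⁻¹ * i x) y) ∧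
    (∀ x y : K, (fun x : K => (i 1)⁻¹ * i x) (x * y) =
        (fun x : K => (i 1)⁻¹ * i x) x * (fun x : K => (i 1)⁻¹ * i x) y) := by
  -- additivity of i
  have hiadd : ∀ z w : K, i (z + w) = i z + i w := by
    intro z w
    have e := hmul ⟨0, 0, z⟩ ⟨0, 0, w⟩
    have h : (⟨0, 0, z⟩ * ⟨0, 0, w⟩ : Heisenberg K) = ⟨0, 0, z + w⟩ := by
      ext <;> simp
    rw [h, hz, hz, hz] at e
    have := congrArg Heisenberg.c e
    simpa using this
  have hizero : i (0 : K) = 0 := by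
    have := hiadd 0 0
    rw [add_zero] at this
    linear_combination -this
  have hione : i 1 ≠ 0 := by
    intro h0
    have e : Ψ ⟨0, 0, 1⟩ = Ψ ⟨0, 0, 0⟩ := by
      rw [hz, hz, h0, hizero]
    have := congrArg Heisenberg.c (hinj e)
    simp at this
  -- key commutator relation
  have hkey : ∀ x y : K, i (x * y) = f₁ x * g₂ y - f₂ y * g₁ x := by
    intro x y
    have h : (⟨x, 0, 0⟩ * ⟨0, y, 0⟩ : Heisenberg K)
        = ⟨0, 0, x * y⟩ * (⟨0, y, 0⟩ * ⟨x, 0, 0⟩) := by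
      ext <;> simp
    have e := congrArg Ψ h
    rw [hmul, hmul, hmul, h1, h2, hz] at e
    have := congrArg Heisenberg.c e
    simp at this
    linear_combination -this
  -- f₁, g₁ "proportionality"
  have hc1 : ∀ x : K, f₁ x * g₁ 1 = f₁ 1 * g₁ x := by
    intro x
    have h : (⟨x, 0, 0⟩ * ⟨1, 0, 0⟩ : Heisenberg K) = ⟨1, 0, 0⟩ * ⟨x, 0, 0⟩ := by
      ext <;> simp [add_comm]
    have e := congrArg Ψ h
    rw [hmul, hmul, h1, h1] at e
    have := congrArg Heisenberg.c e
    simp at this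
    linear_combination this
  have hc2 : ∀ y : K, f₂ y * g₂ 1 = f₂ 1 * g₂ y := by
    intro y
    have h : (⟨0, y, 0⟩ * ⟨0, 1, 0⟩ : Heisenberg K) = ⟨0, 1, 0⟩ * ⟨0, y, 0⟩ := by
      ext <;> simp [add_comm]
    have e := congrArg Ψ h
    rw [hmul, hmul, h2, h2] at e
    have := congrArg Heisenberg.c e
    simp at this
    linear_combination this
  -- scaled multiplicativity
  have hmul' : ∀ x y : K, i 1 * i (x * y) = i x * i y := by
    intro x y
    have ex : i x = f₁ x * g₂ 1 - f₂ 1 * g₁ x := by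
      have := hkey x 1; rwa [mul_one] at this
    have ey : i y = f₁ 1 * g₂ y - f₂ y * g₁ 1 := by
      have := hkey 1 y; rwa [one_mul] at this
    have e1 : i 1 = f₁ 1 * g₂ 1 - f₂ 1 * g₁ 1 := by
      have := hkey 1 1; rwa [mul_one] at this
    rw [ex, ey, e1, hkey x y]
    linear_combination (g₂ 1 * f₂ y - f₂ 1 * g₂ y) * hc1 x
  refine ⟨hione, by have := hkey 1 1; rwa [mul_one] at this,
    by simp [inv_mul_cancel₀ hione], ?_, ?_⟩
  · intro x y
    simp only [hiadd]
    ring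
  · intro x y
    simp only
    field_simp
    linear_combination hmul' x y
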